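/- Let Ψ = (E, Δ) be an ordered complex satisfying the quasi-circuit axiom. If B is a facet and e ∈ E \ B is externally active with respect to B (i.e., there is a circuit C ⊆ B ∪ {e} with e = min C), then there is exactly one circuit contained in B ∪ {e}. -/

import Mathlib

variable {α : Type*} [LinearOrder α] [DecidableEq α] [Fintype α]

/-- A (abstract) simplicial complex: a downward closed family of finite sets. -/
def IsComplex (Δ : Finset α → Prop) : Prop :=
  ∀ ⦃s t : Finset α⦄, Δ t → s ⊆ t → Δ s

/-- A simplicial complex with all faces contained in the ground set `E`. -/
def IsComplexOn (E : Finset α) (Δ : Finset α → Prop) : Prop :=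
  (∀ ⦃s⦄, Δ s → s ⊆ E) ∧ IsComplex Δ

/-- A facet (basis): a maximal face. -/
def IsFacet (Δ : Finset α → Prop) (B : Finset α) : Prop :=
  Δ B ∧ ∀ ⦃C⦄, Δ C → B ⊆ C → B = C

/-- A circuit with respect to the ground set `E`: a minimal non-face contained in `E`. -/
def IsCircuitOn (E : Finset α) (Δ : Finset α → Prop) (C : Finset α) : Prop :=
  C ⊆ E ∧ ¬ Δ C ∧ ∀ ⦃D⦄, D ⊂ C → Δ D

/-- A circuit: a minimal non-face. -/
def IsCircuit (Δ : Finset α → Prop) (C : Finset α) : Prop :=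
  ¬ Δ C ∧ ∀ ⦃D⦄, D ⊂ C → Δ D

/-- Purity: all facets have the same cardinality. -/
def IsPure (Δ : Finset α → Prop) : Prop :=
  ∀ ⦃B B'⦄, IsFacet Δ B → IsFacet Δ B' → B.card = B'.card

/-- Lexicographic order on finite sets, comparing sorted element lists:
`B <lex B'` iff the minimum of the symmetric difference lies in `B`. -/
def lexLt (B B' : Finset α) : Prop :=
  ∃ a ∈ B \ B', ∀ b ∈ symmDiff B B', a ≤ b

def lexLe (B B' : Finset α) : Prop := B = B' ∨ lexLt B B'

/-- `B₀` is the lexicographically smallest facet of `Δ`. -/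
def IsLexMinFacet (Δ : Finset α → Prop) (B₀ : Finset α) : Prop :=
  IsFacet Δ B₀ ∧ ∀ ⦃B⦄, IsFacet Δ B → lexLe B₀ B

/-- Gale (componentwise) order: the `i`-th smallest element of `B` is at most
the `i`-th smallest element of `B'`, for all `i` (in particular equal cardinalities). -/
def galeLe (B B' : Finset α) : Prop :=
  List.Forall₂ (· ≤ ·) (Finset.sort B (· ≤ ·)) (Finset.sort B' (· ≤ ·))

/-- Quasi-exchange axiom (without the purity requirement). -/
def QE (Δ : Finset α → Prop) : Prop :=
  ∀ ⦃B₁ B₂⦄, IsFacet Δ B₁ → IsFacet Δ B₂ →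
    ∀ b₁ ∈ B₁ \ B₂, (∀ b ∈ B₂ \ B₁, b < b₁) →
      ∃ b₂ ∈ B₂ \ B₁, IsFacet Δ (insert b₂ (B₁.erase b₁))

/-- Quasi-circuit axiom (with circuits taken relative to the ground set `E`). -/
def QCon (E : Finset α) (Δ : Finset α → Prop) : Prop :=
  ∀ ⦃C₁ C₂⦄, IsCircuitOn E Δ C₁ → IsCircuitOn E Δ C₂ → C₁ ≠ C₂ →
    ∀ c ∈ C₁ ∩ C₂, (∃ m ∈ symmDiff C₁ C₂, c < m) →
      ∃ C₃, IsCircuitOn E Δ C₃ ∧ C₃ ⊆ (C₁ ∪ C₂).erase c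

/-- Quasi-circuit axiom (circuits are arbitrary minimal non-faces). -/
def QC (Δ : Finset α → Prop) : Prop :=
  ∀ ⦃C₁ C₂⦄, IsCircuit Δ C₁ → IsCircuit Δ C₂ → C₁ ≠ C₂ →
    ∀ c ∈ C₁ ∩ C₂, (∃ m ∈ symmDiff C₁ C₂, c < m) →
      ∃ C₃, IsCircuit Δ C₃ ∧ C₃ ⊆ (C₁ ∪ C₂).erase c

/-- `b` is an internally passive element of the facet `B`. -/
def InternallyPassive (Δ : Finset α → Prop) (B : Finset α) (b : α) : Prop :=
  b ∈ B ∧ ∃ b', b' < b ∧ b' ∉ B ∧ IsFacet Δ (insert b' (B.erase b))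

/-- Contraction of a face `I`. -/
def contract (Δ : Finset α → Prop) (I : Finset α) : Finset α → Prop :=
  fun J => Disjoint J I ∧ Δ (J ∪ I)

/-- Quasi-independence axiom: `Δ` is pure and for faces `I₁, I₂` with `|I₁| > |I₂|`,
if `I₁ \ I ⊆ B_{I,0}` for some `I ⊆ I₁ ∩ I₂`, then some `e ∈ I₁ \ I₂` extends `I₂`. -/
def QI (Δ : Finset α → Prop) : Prop :=
  IsPure Δ ∧ ∀ ⦃I₁ I₂ : Finset α⦄, Δ I₁ → Δ I₂ → I₂.card < I₁.card →
    (∃ I, I ⊆ I₁ ∩ I₂ ∧ ∃ B, IsLexMinFacet (contract Δ I) B ∧ I₁ \ I ⊆ B) →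
    ∃ e ∈ I₁ \ I₂, Δ (insert e I₂)

/-- The First Basis Property. -/
inductive FBP : (Finset α → Prop) → Prop
  | rank1 (Δ : Finset α → Prop) (h : ∀ s, Δ s → s.card ≤ 1) : FBP Δ
  | unique (Δ : Finset α → Prop) (B : Finset α) (hB : IsFacet Δ B)
      (hu : ∀ B', IsFacet Δ B' → B' = B) : FBP Δ
  | step (Δ : Finset α → Prop) (B₀ : Finset α) (h₀ : IsLexMinFacet Δ B₀)
      (h1 : ∀ v, Δ {v} → v ∉ B₀ → FBP (contract Δ {v}))
      (h2 : ∀ v, Δ {v} → v ∉ B₀ →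
        ∃ Bv, IsLexMinFacet (contract Δ {v}) Bv ∧ Bv ⊆ B₀) :
      FBP Δ

/-- in a complex satisfying the quasi-circuit axiom, if `e ∉ B` is
externally active with respect to a facet `B`, then there is exactly one circuit
contained in `B ∪ {e}`. -/
theorem stmt8 (E : Finset α) (Δ : Finset α → Prop) (hΔ : IsComplexOn E Δ)
    (hQC : QCon E Δ) (B : Finset α) (hB : IsFacet Δ B) (e : α) (heE : e ∈ E) (heB : e ∉ B)
    (hact : ∃ C, IsCircuitOn E Δ C ∧ C ⊆ insert e B ∧ e ∈ C ∧ ∀ x ∈ C, e ≤ x) :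
    ∃! C, IsCircuitOn E Δ C ∧ C ⊆ insert e B := by
  obtain ⟨C, hC, hCB, heC, hmin⟩ := hact
  refine ⟨C, ⟨hC, hCB⟩, ?_⟩
  rintro C' ⟨hC', hC'B⟩
  by_contra hne
  have heC' : e ∈ C' := by
    by_contra h
    refine hC'.2.1 (hΔ.2 hB.1 (fun x hx => ?_))
    rcases Finset.mem_insert.mp (hC'B hx) with h' | h'
    · exact absurd (h' ▸ hx) h
    · exact h'
  have hnsub : ¬ C ⊆ C' := by
    intro hsub
    exact hC.2.1 (hC'.2.2 ⟨hsub, fun h => (Ne.symm hne) (Finset.Subset.antisymm hsub h)⟩)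
  obtain ⟨m, hmC, hmC'⟩ := Finset.not_subset.mp hnsub
  have hem : e < m := lt_of_le_of_ne (hmin m hmC) (fun h => hmC' (h ▸ heC'))
  obtain ⟨C₃, hC₃, hC₃sub⟩ := hQC hC hC' (fun h => hne h.symm) e
    (Finset.mem_inter.mpr ⟨heC, heC'⟩)
    ⟨m, Finset.mem_symmDiff.mpr (Or.inl ⟨hmC, hmC'⟩), hem⟩
  refine hC₃.2.1 (hΔ.2 hB.1 (fun x hx => ?_))
  have hx' := hC₃sub hx
  have hxe : x ≠ e := Finset.ne_of_mem_erase hx'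
  have : x ∈ C ∪ C' := Finset.mem_of_mem_erase hx'
  rcases Finset.mem_union.mp this with h | h
  · rcases Finset.mem_insert.mp (hCB h) with h' | h'
    · exact absurd h' hxe
    · exact h'
  · rcases Finset.mem_insert.mp (hC'B h) with h' | h'
    · exact absurd h' hxe
    · exact h'
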